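/- arXiv:1410.1603 — 2 statements merged into one kernel-verified Lean document; each statement's English description precedes it below -/
import Mathlib

section
/- There is an absolute constant c₀ > 0 such that for every real r ≥ 4 and every prime p: if p ≤ r^{2/3} then |log h_p(r) − r·log p/(p+1)| ≤ c₀ and |log h_p(−r) − r·log p/(p−1)| ≤ c₀; while if p > r^{2/3} then |log h_p(r) − log cosh(r·log p/(p+1))| ≤ c₀·r·(log p)/p² and |log h_p(−r) − log cosh(r·log p/(p−1))| ≤ c₀·r·(log p)/p². -/
open scoped Classical
open MeasureTheory ProbabilityTheory Complex

noncomputable section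

/-- A fundamental discriminant: `D ≠ 1` with either `D ≡ 1 (mod 4)` squarefree, or `D = 4m`
with `m` squarefree and `m ≡ 2, 3 (mod 4)`. -/
def IsFundamentalDiscriminant (D : ℤ) : Prop :=
  D ≠ 1 ∧ ((D % 4 = 1 ∧ Squarefree D) ∨
    ∃ m : ℤ, D = 4 * m ∧ Squarefree m ∧ (m % 4 = 2 ∨ m % 4 = 3))

/-- The Kronecker symbol `(D/2)`. -/
def kronAtTwo (D : ℤ) : ℤ :=
  if D % 2 = 0 then 0 else if D % 8 = 1 ∨ D % 8 = 7 then 1 else -1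

/-- The Kronecker symbol `χ_D(n) = (D/n)` for `n ≥ 1`, via
`(D/n) = (D/2)^{v₂(n)} · (D / oddpart(n))`, the latter a Jacobi symbol. -/
def kroneckerChar (D : ℤ) (n : ℕ) : ℤ :=
  if n = 0 then 0 else kronAtTwo D ^ (n.factorization 2) * jacobiSym D (ordCompl[2] n)

/-- `F(x)`: the finite set of fundamental discriminants `D` with `|D| ≤ x`. -/
def FD (x : ℝ) : Finset ℤ :=
  (Finset.Icc (-(⌊x⌋)) ⌊x⌋).filter IsFundamentalDiscriminant

/-- `L` is the (entire) analytic continuation of the Dirichlet series `∑ χ_D(n) n^{-s}`,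
i.e. the Dirichlet L-function `L(s, χ_D)` of the quadratic character `χ_D`. -/
def IsLFunctionOf (D : ℤ) (L : ℂ → ℂ) : Prop :=
  (∀ s : ℂ, DifferentiableAt ℂ L s) ∧
  ∀ s : ℂ, 1 < s.re → HasSum (fun n : ℕ => (kroneckerChar D n : ℂ) / (n : ℂ) ^ s) (L s)

/-- The Euler-Kronecker constant `γ_D = γ + L'(1,χ_D)/L(1,χ_D)` (a real number). -/
def EKconst (L : ℂ → ℂ) : ℝ :=
  Real.eulerMascheroniConstant + (deriv L 1 / L 1).re

/-- The random model: `(X(p))_p` independent with the prescribed distribution,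
extended multiplicatively to all positive integers. -/
def IsRandomModel {Ω : Type} [MeasurableSpace Ω] (μ : Measure Ω) (X : ℕ → Ω → ℝ) : Prop :=
  IsProbabilityMeasure μ ∧
  (∀ n, Measurable (X n)) ∧
  (∀ p : ℕ, p.Prime →
    μ {ω | X p ω = 1} = ENNReal.ofReal ((p : ℝ) / (2 * (p + 1))) ∧
    μ {ω | X p ω = -1} = ENNReal.ofReal ((p : ℝ) / (2 * (p + 1))) ∧
    μ {ω | X p ω = 0} = ENNReal.ofReal (1 / ((p : ℝ) + 1))) ∧
  iIndepFun (fun p : Nat.Primes => X (p : ℕ)) μ ∧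
  ∀ n : ℕ, n ≠ 0 → ∀ ω, X n ω = ∏ p ∈ n.primeFactors, X p ω ^ n.factorization p

/-- The random Euler-Kronecker constant `γ_rand = γ - ∑_{n≥1} Λ(n) X(n)/n`. -/
def gammaRand {Ω : Type} (X : ℕ → Ω → ℝ) (ω : Ω) : ℝ :=
  Real.eulerMascheroniConstant - ∑' n : ℕ, ArithmeticFunction.vonMangoldt n * X n ω / n

/-- The constant `A₀ = ∫₀¹ tanh(t)/t dt + ∫₁^∞ (tanh(t)-1)/t dt`. -/
def A0 : ℝ :=
  (∫ t in (0:ℝ)..1, Real.tanh t / t) + ∫ t in Set.Ioi (1:ℝ), (Real.tanh t - 1) / t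

/-- `A₁ = A₀ + 2ζ'(2)/ζ(2)`. -/
def A1 : ℝ := A0 + (2 * deriv riemannZeta 2 / riemannZeta 2).re

/-- `A₂ = A₀ - 2γ`. -/
def A2 : ℝ := A0 - 2 * Real.eulerMascheroniConstant

/-- `h_p(s) = E[exp(-s (log p) X(p)/(p - X(p)))]`. -/
def hp (p : ℕ) (s : ℝ) : ℝ :=
  (p : ℝ) / (2 * ((p : ℝ) + 1)) * Real.exp (s * Real.log p / ((p : ℝ) + 1)) +
    (p : ℝ) / (2 * ((p : ℝ) + 1)) * Real.exp (-s * Real.log p / ((p : ℝ) - 1)) +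
    1 / ((p : ℝ) + 1)

/-- `M(s) = γ s + ∑_p log h_p(s)`, which for real `s` is `log E[exp(s γ_rand)]`. -/
def Mfun (s : ℝ) : ℝ :=
  Real.eulerMascheroniConstant * s + ∑' p : Nat.Primes, Real.log (hp (p : ℕ) s)

/-- `Λ_k`, the `k`-fold Dirichlet convolution of the von Mangoldt function. -/
def LambdaK (k : ℕ) (n : ℕ) : ℝ := (ArithmeticFunction.vonMangoldt ^ k) n

/-- The Laplace transform `Λ̂(s) = E[exp(s γ_rand)]` at a complex argument. -/
def laplaceC {Ω : Type} [MeasurableSpace Ω] (μ : Measure Ω) (X : ℕ → Ω → ℝ) (s : ℂ) : ℂ :=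
  ∫ ω, Complex.exp (s * (gammaRand X ω : ℂ)) ∂μ

end

private lemma exp_neg_sub_le (u v : ℝ) (hu : 0 ≤ u) :
    Real.exp (-u) - Real.exp (-v) ≤ |u - v| := by
  rcases le_total u v with h | h
  · have h1 : Real.exp (-u) ≤ 1 := by
      calc Real.exp (-u) ≤ Real.exp 0 := Real.exp_le_exp.2 (by linarith)
        _ = 1 := Real.exp_zero
    have h2 : Real.exp (-v) = Real.exp (-u) * Real.exp (-(v - u)) := by
      rw [← Real.exp_add]; ring_nf
    have h3 : 1 - (v - u) ≤ Real.exp (-(v - u)) := by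
      have := Real.add_one_le_exp (-(v - u)); linarith
    have h4 : 0 < Real.exp (-u) := Real.exp_pos _
    have h5 : |u - v| = v - u := by rw [abs_sub_comm]; exact abs_of_nonneg (by linarith)
    nlinarith
  · have h1 : Real.exp (-u) ≤ Real.exp (-v) := Real.exp_le_exp.2 (by linarith)
    have := abs_nonneg (u - v)
    linarith

private lemma aux1 (a b t u : ℝ) (ha : 1/3 ≤ a) (hb : 0 ≤ b) (hab : 2*a + b = 1)
    (ht : 0 ≤ t) (hu : 0 ≤ u) :
    |Real.log (a * Real.exp t + a * Real.exp (-u) + b) - t| ≤ Real.log 3 := by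
  have hexpt : 1 ≤ Real.exp t := Real.one_le_exp ht
  have hexpu0 : 0 < Real.exp (-u) := Real.exp_pos _
  have hexpu : Real.exp (-u) ≤ 1 := by
    calc Real.exp (-u) ≤ Real.exp 0 := Real.exp_le_exp.2 (by linarith)
      _ = 1 := Real.exp_zero
  have hE0 : 0 < a * Real.exp t + a * Real.exp (-u) + b := by nlinarith
  have hle : a * Real.exp t + a * Real.exp (-u) + b ≤ Real.exp t := by nlinarith
  have hge : Real.exp t / 3 ≤ a * Real.exp t + a * Real.exp (-u) + b := by nlinarith
  have h1 : Real.log (a * Real.exp t + a * Real.exp (-u) + b) ≤ t := by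
    have := Real.log_le_log hE0 hle
    rwa [Real.log_exp] at this
  have h2 : t - Real.log 3 ≤ Real.log (a * Real.exp t + a * Real.exp (-u) + b) := by
    have := Real.log_le_log (by positivity) hge
    rw [Real.log_div (Real.exp_pos t).ne' (by norm_num), Real.log_exp] at this
    linarith
  have h3 : (0:ℝ) ≤ Real.log 3 := Real.log_nonneg (by norm_num)
  rw [abs_le]
  constructor <;> linarith

private lemma aux2 (a b u v d e : ℝ) (ha : 1/3 ≤ a) (ha' : a ≤ 1/2) (hb : 0 ≤ b)
    (hab : 2*a + b = 1) (hu : 0 ≤ u) (hv : 0 ≤ v)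
    (hd : |u - v| ≤ d) (he : b * v ≤ e) :
    |Real.log (a * Real.exp v + a * Real.exp (-u) + b) - Real.log (Real.cosh v)| ≤
      2*d + 3*e := by
  have hC1 : 1 ≤ Real.cosh v := Real.one_le_cosh v
  have hC0 : (0:ℝ) < Real.cosh v := by linarith
  have hcoshle : Real.cosh v ≤ Real.exp v := by
    rw [Real.cosh_eq]
    have : Real.exp (-v) ≤ Real.exp v := Real.exp_le_exp.2 (by linarith)
    linarith
  have hexpu0 : 0 < Real.exp (-u) := Real.exp_pos _
  have hEexp : a * Real.cosh v ≤ a * Real.exp v + a * Real.exp (-u) + b := by nlinarith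
  have hE0 : 0 < a * Real.exp v + a * Real.exp (-u) + b := by nlinarith
  set E := a * Real.exp v + a * Real.exp (-u) + b with hE
  have hd0 : 0 ≤ d := le_trans (abs_nonneg _) hd
  have he0 : 0 ≤ e := le_trans (mul_nonneg hb hv) he
  have hCE : Real.cosh v ≤ 3 * E := by nlinarith
  have hch : Real.cosh v - 1 ≤ v * Real.cosh v := by
    rcases le_or_gt 1 v with h | h
    · nlinarith
    · have h1 : 1 - v ≤ Real.exp (-v) := by
        have := Real.add_one_le_exp (-v); linarith
      have h2 : Real.exp (-v) * Real.exp v = 1 := by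
        rw [← Real.exp_add]; simp
      rw [Real.cosh_eq]
      nlinarith [Real.exp_pos v, Real.exp_pos (-v)]
  have hEeq : E = 2*a*Real.cosh v + a*(Real.exp (-u) - Real.exp (-v)) + b := by
    rw [hE, Real.cosh_eq]; ring
  have hl1 : Real.exp (-u) - Real.exp (-v) ≤ d := le_trans (exp_neg_sub_le u v hu) hd
  have hl2 : Real.exp (-v) - Real.exp (-u) ≤ d := by
    have h := exp_neg_sub_le v u hv
    rw [abs_sub_comm] at h
    exact le_trans h hd
  have hup : Real.log E - Real.log (Real.cosh v) ≤ d := by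
    have hEle : E ≤ Real.cosh v * (1 + d) := by nlinarith
    have h1 := Real.log_le_log hE0 hEle
    rw [Real.log_mul hC0.ne' (by positivity)] at h1
    have hld : Real.log (1 + d) ≤ d := by
      have := Real.log_le_sub_one_of_pos (show (0:ℝ) < 1 + d by linarith)
      linarith
    linarith
  have hlo : Real.log (Real.cosh v) - Real.log E ≤ 3*e + 3*(d/2) := by
    have h1 : Real.cosh v - E ≤ (e + d/2) * Real.cosh v := by nlinarith
    have h2 : Real.log (Real.cosh v) - Real.log E = Real.log (Real.cosh v / E) := by
      rw [Real.log_div hC0.ne' hE0.ne']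
    have h3 : Real.log (Real.cosh v / E) ≤ Real.cosh v / E - 1 :=
      Real.log_le_sub_one_of_pos (by positivity)
    have h4 : Real.cosh v / E - 1 ≤ 3*e + 3*(d/2) := by
      rw [div_sub_one hE0.ne', div_le_iff₀ hE0]
      nlinarith
    linarith
  rw [abs_le]
  constructor <;> linarith

set_option maxHeartbeats 2000000 in
/-- Lemma 4.2: approximations of `log h_p(±r)` for `r ≥ 4`, according to
whether `p ≤ r^{2/3}` or `p > r^{2/3}`. -/
theorem statement13 :
    ∃ c₀ : ℝ, 0 < c₀ ∧
      ∀ r : ℝ, 4 ≤ r → ∀ p : ℕ, p.Prime →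
        ((p : ℝ) ≤ r ^ ((2 : ℝ) / 3) →
          |Real.log (hp p r) - r * Real.log p / ((p : ℝ) + 1)| ≤ c₀ ∧
          |Real.log (hp p (-r)) - r * Real.log p / ((p : ℝ) - 1)| ≤ c₀) ∧
        (r ^ ((2 : ℝ) / 3) < (p : ℝ) →
          |Real.log (hp p r) - Real.log (Real.cosh (r * Real.log p / ((p : ℝ) + 1)))|
              ≤ c₀ * r * Real.log p / (p : ℝ) ^ 2 ∧
          |Real.log (hp p (-r)) - Real.log (Real.cosh (r * Real.log p / ((p : ℝ) - 1)))|
              ≤ c₀ * r * Real.log p / (p : ℝ) ^ 2) := by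
  refine ⟨14, by norm_num, ?_⟩
  intro r hr p hpp
  have hr0 : (0:ℝ) < r := by linarith
  have hP2 : (2:ℝ) ≤ (p:ℝ) := by exact_mod_cast hpp.two_le
  have hL : 0 < Real.log p := Real.log_pos (by linarith)
  set P : ℝ := (p:ℝ) with hPdef
  set L : ℝ := Real.log P with hLdef
  set a : ℝ := P / (2*(P+1)) with hadef
  set b : ℝ := 1/(P+1) with hbdef
  set t : ℝ := r * L / (P+1) with htdef
  set t' : ℝ := r * L / (P-1) with ht'def
  clear_value t' t b a L P
  have hPp : (0:ℝ) < P + 1 := by linarith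
  have hPm : (0:ℝ) < P - 1 := by linarith
  have ha : 1/3 ≤ a := by rw [hadef, le_div_iff₀ (by linarith)]; linarith
  have ha' : a ≤ 1/2 := by rw [hadef, div_le_iff₀ (by linarith)]; linarith
  have hb : 0 ≤ b := by rw [hbdef]; positivity
  have hab : 2*a + b = 1 := by rw [hadef, hbdef]; field_simp
  have hrL : 0 ≤ r * L := mul_nonneg hr0.le hL.le
  have ht : 0 ≤ t := by rw [htdef]; exact div_nonneg hrL hPp.le
  have ht' : 0 ≤ t' := by rw [ht'def]; exact div_nonneg hrL hPm.le
  have htt : t ≤ t' := by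
    rw [htdef, ht'def]
    exact div_le_div_of_nonneg_left hrL hPm (by linarith)
  have e1 : hp p r = a * Real.exp t + a * Real.exp (-t') + b := by
    simp only [hp]
    rw [← hPdef, ← hLdef, hadef, hbdef, htdef, ht'def]
    rw [show -r * L / (P-1) = -(r * L / (P-1)) by ring]
  have e2 : hp p (-r) = a * Real.exp t' + a * Real.exp (-t) + b := by
    simp only [hp]
    rw [← hPdef, ← hLdef, hadef, hbdef, htdef, ht'def]
    rw [show -r * L / (P+1) = -(r * L / (P+1)) by ring,
      show -(-r) * L / (P-1) = r * L / (P-1) by ring]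
    ring
  have hdbound : |t' - t| ≤ 4 * (r * L / P^2) := by
    rw [_root_.abs_of_nonneg (by linarith : (0:ℝ) ≤ t' - t)]
    have key : t' - t = 2*(r*L) / ((P-1)*(P+1)) := by
      rw [htdef, ht'def]; field_simp; ring
    rw [key, show 4 * (r * L / P^2) = 4*(r*L) / P^2 by ring,
      div_le_div_iff₀ (by nlinarith) (by positivity)]
    nlinarith [mul_nonneg hrL (show (0:ℝ) ≤ 2*P^2 - 4 by nlinarith)]
  have hbt : b * t ≤ 2 * (r*L/P^2) := by
    have key : b * t = r*L / ((P+1)*(P+1)) := by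
      rw [hbdef, htdef]; field_simp
    rw [key, show 2 * (r * L / P^2) = 2*(r*L) / P^2 by ring,
      div_le_div_iff₀ (by positivity) (by positivity)]
    nlinarith [mul_nonneg hrL (show (0:ℝ) ≤ (P+1)*(P+1) - P^2 by nlinarith)]
  have hbt' : b * t' ≤ 2 * (r*L/P^2) := by
    have key : b * t' = r*L / ((P+1)*(P-1)) := by
      rw [hbdef, ht'def]; field_simp
    rw [key, show 2 * (r * L / P^2) = 2*(r*L) / P^2 by ring,
      div_le_div_iff₀ (by nlinarith) (by positivity)]
    nlinarith [mul_nonneg hrL (show (0:ℝ) ≤ P^2 - 2 by nlinarith)]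
  have hl3 : Real.log 3 ≤ (14:ℝ) := by
    have := Real.log_le_sub_one_of_pos (show (0:ℝ) < 3 by norm_num); linarith
  constructor
  · intro _
    constructor
    · rw [e1]
      exact le_trans (aux1 a b t t' ha hb hab ht ht') hl3
    · rw [e2]
      exact le_trans (aux1 a b t' t ha hb hab ht' ht) hl3
  · intro _
    constructor
    · rw [e1]
      have h := aux2 a b t' t (4*(r*L/P^2)) (2*(r*L/P^2)) ha ha' hb hab ht' ht hdbound hbt
      calc |Real.log (a * Real.exp t + a * Real.exp (-t') + b) - Real.log (Real.cosh t)|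
          ≤ 2*(4*(r*L/P^2)) + 3*(2*(r*L/P^2)) := h
        _ = 14 * r * L / P^2 := by ring
    · rw [e2]
      have hd2 : |t - t'| ≤ 4*(r*L/P^2) := by rwa [abs_sub_comm]
      have h := aux2 a b t t' (4*(r*L/P^2)) (2*(r*L/P^2)) ha ha' hb hab ht ht' hd2 hbt'
      calc |Real.log (a * Real.exp t' + a * Real.exp (-t) + b) - Real.log (Real.cosh t')|
          ≤ 2*(4*(r*L/P^2)) + 3*(2*(r*L/P^2)) := h
        _ = 14 * r * L / P^2 := by ring
end

section
/- There is an absolute constant c₀ > 0 such that for every real r ≥ 4 and every prime p: if p ≤ r^{2/3} then |h_p'(r)/h_p(r) − log p/(p+1)| ≤ c₀·(log p/(p+1))·exp(−r^{1/3}) and |h_p'(−r)/h_p(−r) + log p/(p−1)| ≤ c₀·(log p/(p−1))·exp(−r^{1/3}); while if p > r^{2/3} then |h_p'(r)/h_p(r) − (log p/(p+1))·tanh(r·log p/(p+1))| ≤ c₀·((log p)/p² + r·(log p)²/p³) and |h_p'(−r)/h_p(−r) + (log p/(p−1))·tanh(r·log p/(p−1))| ≤ c₀·((log p)/p² + r·(log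 p)²/p³), where h_p' denotes the derivative of h_p. -/
open scoped Classical
open MeasureTheory ProbabilityTheory Complex

lemma hp_hasDerivAt (p : ℕ) (s : ℝ) :
    HasDerivAt (hp p)
      ((p:ℝ)/(2*((p:ℝ)+1)) * (Real.log p/((p:ℝ)+1)) * Real.exp (Real.log p/((p:ℝ)+1) * s)
        - (p:ℝ)/(2*((p:ℝ)+1)) * (Real.log p/((p:ℝ)-1)) * Real.exp (-(Real.log p/((p:ℝ)-1) * s))) s := by
  have h1 : HasDerivAt (fun t : ℝ => t * Real.log p / ((p:ℝ)+1)) (Real.log p / ((p:ℝ)+1)) s := by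
    simpa using ((hasDerivAt_id s).mul_const (Real.log p)).div_const ((p:ℝ)+1)
  have h2 : HasDerivAt (fun t : ℝ => -t * Real.log p / ((p:ℝ)-1)) (-(Real.log p / ((p:ℝ)-1))) s := by
    have := (((hasDerivAt_id s).neg).mul_const (Real.log p)).div_const ((p:ℝ)-1)
    simpa [neg_div] using this
  have h3 := (((h1.exp.const_mul ((p:ℝ)/(2*((p:ℝ)+1)))).add
      (h2.exp.const_mul ((p:ℝ)/(2*((p:ℝ)+1))))).add_const (1/((p:ℝ)+1)))
  have e1 : s * Real.log p / ((p:ℝ)+1) = Real.log p/((p:ℝ)+1) * s := by ring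
  have e2 : -s * Real.log p / ((p:ℝ)-1) = -(Real.log p/((p:ℝ)-1) * s) := by ring
  refine HasDerivAt.congr_deriv h3 ?_
  rw [← e1, ← e2]
  ring

lemma hp_deriv (p : ℕ) (s : ℝ) :
    deriv (hp p) s
      = (p:ℝ)/(2*((p:ℝ)+1)) * (Real.log p/((p:ℝ)+1)) * Real.exp (Real.log p/((p:ℝ)+1) * s)
        - (p:ℝ)/(2*((p:ℝ)+1)) * (Real.log p/((p:ℝ)-1)) * Real.exp (-(Real.log p/((p:ℝ)-1) * s)) :=
  (hp_hasDerivAt p s).deriv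

lemma hp_eq (p : ℕ) (s : ℝ) :
    hp p s = (p:ℝ)/(2*((p:ℝ)+1)) * Real.exp (Real.log p/((p:ℝ)+1) * s)
      + (p:ℝ)/(2*((p:ℝ)+1)) * Real.exp (-(Real.log p/((p:ℝ)-1) * s)) + 1/((p:ℝ)+1) := by
  unfold hp
  rw [show s * Real.log p / ((p:ℝ)+1) = Real.log p/((p:ℝ)+1) * s from by ring,
    show -s * Real.log p / ((p:ℝ)-1) = -(Real.log p/((p:ℝ)-1) * s) from by ring]



lemma expabs (x y : ℝ) (hx : 0 ≤ x) (hy : 0 ≤ y) :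
    |Real.exp (-x) - Real.exp (-y)| ≤ |x - y| := by
  have key : ∀ u v : ℝ, 0 ≤ u → u ≤ v → Real.exp (-u) - Real.exp (-v) ≤ v - u := by
    intro u v hu huv
    have hm : Real.exp (-u) * Real.exp (u - v) = Real.exp (-v) := by
      rw [← Real.exp_add]; ring_nf
    have h1 : u - v + 1 ≤ Real.exp (u - v) := Real.add_one_le_exp _
    have h2 : Real.exp (-u) ≤ 1 := Real.exp_le_one_iff.mpr (by linarith)
    have h3 : (0:ℝ) < Real.exp (-u) := Real.exp_pos _
    nlinarith [mul_le_mul_of_nonneg_left h1 h3.le]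
  rcases le_total x y with h | h
  · rw [_root_.abs_of_nonneg (sub_nonneg.mpr (Real.exp_le_exp.mpr (by linarith))),
      _root_.abs_of_nonpos (by linarith)]
    have := key x y hx h; linarith
  · rw [_root_.abs_of_nonpos (sub_nonpos.mpr (Real.exp_le_exp.mpr (by linarith))),
      _root_.abs_of_nonneg (by linarith : (0:ℝ) ≤ x - y)]
    have := key y x hy h; linarith

lemma ratioA (a c α β r : ℝ) (ha : 0 < a) (hc0 : 0 ≤ c) (hca : c ≤ a)
    (hα : 0 < α) (hβ : 0 < β) (hr : 0 ≤ r) :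
    |(a*α*Real.exp (α*r) - a*β*Real.exp (-(β*r)))
        / (a*Real.exp (α*r) + a*Real.exp (-(β*r)) + c) - α|
      ≤ (2*α + β) * Real.exp (-(min α β * r)) := by
  set A := Real.exp (α*r) with hAdef
  set B := Real.exp (-(β*r)) with hBdef
  have hA0 : 0 < A := Real.exp_pos _
  have hA1 : 1 ≤ A := Real.one_le_exp (mul_nonneg hα.le hr)
  have hB0 : 0 < B := Real.exp_pos _
  have hden : 0 < a*A + a*B + c := by positivity
  have key : (a*α*A - a*β*B)/(a*A + a*B + c) - α
      = -((a*(α+β)*B + α*c)/(a*A + a*B + c)) := by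
    field_simp
    ring
  rw [key, _root_.abs_neg, _root_.abs_of_nonneg (by positivity)]
  set E := Real.exp (-(min α β * r)) with hEdef
  have hE0 : 0 < E := Real.exp_pos _
  have h1 : (a*(α+β)*B + α*c)/(a*A + a*B + c) ≤ (a*(α+β)*B + α*c)/(a*A) := by
    apply div_le_div_of_nonneg_left (by positivity) (by positivity)
    nlinarith
  have h2 : (a*(α+β)*B + α*c)/(a*A) = (α+β)*(B/A) + (α*(c/a))*(1/A) := by
    field_simp
  have hBA : B/A ≤ E := by
    rw [hBdef, hAdef, ← Real.exp_sub, hEdef]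
    apply Real.exp_le_exp.mpr
    have h3 : min α β * r ≤ β * r := mul_le_mul_of_nonneg_right (min_le_right _ _) hr
    nlinarith [mul_nonneg hα.le hr]
  have hIA : 1/A ≤ E := by
    rw [hAdef, one_div, ← Real.exp_neg, hEdef]
    apply Real.exp_le_exp.mpr
    have h3 : min α β * r ≤ α * r := mul_le_mul_of_nonneg_right (min_le_left _ _) hr
    linarith
  have t1 : (α+β)*(B/A) ≤ (α+β)*E := mul_le_mul_of_nonneg_left hBA (by positivity)
  have t2 : (α*(c/a))*(1/A) ≤ α*E := by
    have hca1 : c/a ≤ 1 := (div_le_one ha).mpr hca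
    have : α*(c/a) ≤ α := by nlinarith
    exact mul_le_mul this hIA (by positivity) hα.le
  calc (a*(α+β)*B + α*c)/(a*A + a*B + c) ≤ (a*(α+β)*B + α*c)/(a*A) := h1
    _ = (α+β)*(B/A) + (α*(c/a))*(1/A) := h2
    _ ≤ (α+β)*E + α*E := add_le_add t1 t2
    _ = (2*α + β) * E := by ring

lemma ratioC (a c α β r : ℝ) (ha : 0 < a) (hc0 : 0 ≤ c) (hα : 0 ≤ α) (hβ : 0 ≤ β)
    (hr : 0 ≤ r) :
    |(a*α*Real.exp (α*r) - a*β*Real.exp (-(β*r)))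
        / (a*Real.exp (α*r) + a*Real.exp (-(β*r)) + c) - α * Real.tanh (α*r)|
      ≤ |β - α| * (1 + (α+β)*r) + α*c/a := by
  set x := α*r with hx
  set y := β*r with hy
  have hx0 : 0 ≤ x := mul_nonneg hα hr
  have hy0 : 0 ≤ y := mul_nonneg hβ hr
  set S := Real.sinh x with hS
  set C := Real.cosh x with hC
  set B := Real.exp (-y) with hB
  have hC1 : (1:ℝ) ≤ C := Real.one_le_cosh x
  have hC0 : (0:ℝ) < C := lt_of_lt_of_le one_pos hC1
  have hS0 : (0:ℝ) ≤ S := by rw [hS]; positivity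
  have hCS : C - S = Real.exp (-x) := Real.cosh_sub_sinh x
  have hSC : S ≤ C := by nlinarith [Real.exp_pos (-x)]
  have hB0 : (0:ℝ) < B := Real.exp_pos _
  have hA : Real.exp x = C + S := (Real.cosh_add_sinh x).symm
  have htanh : Real.tanh x = S / C := Real.tanh_eq_sinh_div_cosh x
  rw [hA, htanh]
  set den := a*(C+S) + a*B + c with hden
  have hden0 : 0 < den := by
    have h1 : 0 < a*(C+S) := mul_pos ha (by linarith)
    have h2 : 0 < a*B := mul_pos ha hB0
    rw [hden]; linarith
  have hdena : a ≤ den := by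
    have h1 : a*1 ≤ a*(C+S) := mul_le_mul_of_nonneg_left (by linarith) ha.le
    have h2 : 0 < a*B := mul_pos ha hB0
    rw [hden]; linarith
  set E1 := a*α*(C-S) - a*β*B with hE1
  set E2 := a*(B - (C-S)) + c with hE2
  have hiden : (a*α*(C+S) - a*β*B)/den - α*(S/C) = (E1*C - α*S*E2)/(den*C) := by
    rw [hE1, hE2]
    field_simp
    ring
  rw [hiden, _root_.abs_div, _root_.abs_of_pos (mul_pos hden0 hC0)]
  have hnum : |E1*C - α*S*E2| ≤ (|E1| + α* |E2|)*C := by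
    calc |E1*C - α*S*E2| ≤ |E1*C| + |α*S*E2| := _root_.abs_sub _ _
      _ = |E1| * C + α*S* |E2| := by
          rw [_root_.abs_mul, _root_.abs_mul, _root_.abs_mul, _root_.abs_of_pos hC0, _root_.abs_of_nonneg hα,
            _root_.abs_of_nonneg hS0]
      _ ≤ (|E1| + α* |E2|)*C := by nlinarith [mul_le_mul_of_nonneg_left hSC (mul_nonneg hα (_root_.abs_nonneg E2)), _root_.abs_nonneg E1]
  have hxy : |x - y| = |β - α| * r := by
    rw [show x - y = -((β-α)*r) from by rw [hx, hy]; ring, _root_.abs_neg, _root_.abs_mul,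
      _root_.abs_of_nonneg hr]
  have hCSB : |(C-S) - B| ≤ |β - α| * r := by
    rw [← hxy, hCS, hB]; exact expabs x y hx0 hy0
  have hCS1 : |C - S| ≤ 1 := by
    rw [hCS, _root_.abs_of_nonneg (Real.exp_pos _).le]
    exact Real.exp_le_one_iff.mpr (by linarith)
  have hE1b : |E1| ≤ a*(|β-α| + β*(|β-α| *r)) := by
    have h1 : E1 = a*((α-β)*(C-S) + β*((C-S) - B)) := by rw [hE1]; ring
    rw [h1, _root_.abs_mul, _root_.abs_of_pos ha]
    apply mul_le_mul_of_nonneg_left _ ha.le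
    calc |(α-β)*(C-S) + β*((C-S)-B)| ≤ |(α-β)*(C-S)| + |β*((C-S)-B)| := _root_.abs_add_le _ _
      _ = |α-β| * |C-S| + β* |(C-S)-B| := by rw [_root_.abs_mul, _root_.abs_mul, _root_.abs_of_nonneg hβ]
      _ ≤ |β-α| *1 + β*(|β-α| *r) := by
          rw [_root_.abs_sub_comm α β]
          exact add_le_add (mul_le_mul_of_nonneg_left hCS1 (_root_.abs_nonneg _))
            (mul_le_mul_of_nonneg_left hCSB hβ)
      _ = |β-α| + β*(|β-α| *r) := by ring
  have hE2b : |E2| ≤ a*(|β-α| *r) + c := by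
    rw [hE2]
    calc |a*(B - (C-S)) + c| ≤ |a*(B - (C-S))| + |c| := _root_.abs_add_le _ _
      _ = a* |(C-S) - B| + c := by
          rw [_root_.abs_mul, _root_.abs_of_pos ha, _root_.abs_of_nonneg hc0, _root_.abs_sub_comm]
      _ ≤ a*(|β-α| *r) + c := by
          exact add_le_add_left (mul_le_mul_of_nonneg_left hCSB ha.le) c
  have hfin : |E1| + α* |E2| ≤ a*(|β-α| *(1+(α+β)*r)) + α*c := by
    have t2 : α* |E2| ≤ α*(a*(|β-α| *r) + c) := mul_le_mul_of_nonneg_left hE2b hα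
    calc |E1| + α* |E2| ≤ a*(|β-α| + β*(|β-α| *r)) + α*(a*(|β-α| *r) + c) :=
          add_le_add hE1b t2
      _ = a*(|β-α| *(1+(α+β)*r)) + α*c := by ring
  calc |E1*C - α*S*E2| / (den*C) ≤ ((|E1| + α* |E2|)*C)/(den*C) :=
        (div_le_div_iff_of_pos_right (mul_pos hden0 hC0)).mpr hnum
    _ = (|E1| + α* |E2|)/den := by
        rw [mul_div_mul_right _ _ hC0.ne']
    _ ≤ (|E1| + α* |E2|)/a := by
        apply div_le_div_of_nonneg_left (by positivity) ha hdena
    _ ≤ (a*(|β-α| *(1+(α+β)*r)) + α*c)/a :=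
        (div_le_div_iff_of_pos_right ha).mpr hfin
    _ = |β-α| *(1+(α+β)*r) + α*c/a := by field_simp



lemma rpow_27_third : ((27:ℝ)) ^ ((1:ℝ)/3) = 3 := by
  rw [show (27:ℝ) = 3 ^ (3:ℝ) from by
    rw [show (3:ℝ) ^ (3:ℝ) = 3 ^ (3:ℕ) from by
      rw [← Real.rpow_natCast 3 3]; norm_num]; norm_num]
  rw [← Real.rpow_mul (by norm_num)]
  norm_num

lemma rpow_27_twothird : ((27:ℝ)) ^ ((2:ℝ)/3) = 9 := by
  rw [show (27:ℝ) = 3 ^ (3:ℝ) from by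
    rw [show (3:ℝ) ^ (3:ℝ) = 3 ^ (3:ℕ) from by
      rw [← Real.rpow_natCast 3 3]; norm_num]; norm_num]
  rw [← Real.rpow_mul (by norm_num)]
  rw [show (3:ℝ) * (2/3) = 2 from by norm_num]
  rw [show (3:ℝ) ^ (2:ℝ) = 3 ^ (2:ℕ) from by rw [← Real.rpow_natCast 3 2]; norm_num]
  norm_num

lemma expbound (p : ℕ) (r : ℝ) (hp' : 2 ≤ p) (hr : 4 ≤ r)
    (hple : (p:ℝ) ≤ r ^ ((2:ℝ)/3)) :
    r ^ ((1:ℝ)/3) - 3 ≤ Real.log p / ((p:ℝ)+1) * r := by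
  have hP2 : (2:ℝ) ≤ (p:ℝ) := by exact_mod_cast hp'
  have hr0 : (0:ℝ) < r := by linarith
  have hL : 0 < Real.log p := Real.log_pos (by linarith)
  have hrhs : 0 ≤ Real.log p / ((p:ℝ)+1) * r := by positivity
  rcases le_total r 27 with h27 | h27
  · have h1 : r ^ ((1:ℝ)/3) ≤ (27:ℝ) ^ ((1:ℝ)/3) :=
      Real.rpow_le_rpow hr0.le h27 (by norm_num)
    rw [rpow_27_third] at h1
    linarith
  · -- 27 ≤ r : show r^{1/3} ≤ α r
    have hr23 : (9:ℝ) ≤ r ^ ((2:ℝ)/3) := by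
      have := Real.rpow_le_rpow (by norm_num : (0:ℝ) ≤ 27) h27 (by norm_num : (0:ℝ) ≤ 2/3)
      rw [rpow_27_twothird] at this; linarith
    have hsplit : r ^ ((1:ℝ)/3) * r ^ ((2:ℝ)/3) = r := by
      rw [← Real.rpow_add hr0]; norm_num
    have hlog2 : (0.6931471803:ℝ) < Real.log 2 := Real.log_two_gt_d9
    have hkey : (p:ℝ) + 1 ≤ Real.log p * r ^ ((2:ℝ)/3) := by
      rcases le_or_gt ((p:ℝ)) 3 with hp3 | hp3
      · have hL2 : Real.log 2 ≤ Real.log p := Real.log_le_log (by norm_num) hP2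
        nlinarith
      · have hp4 : (4:ℝ) ≤ (p:ℝ) := by
          have h3 : 3 < p := by exact_mod_cast hp3
          exact_mod_cast h3
        have hL4 : Real.log 4 ≤ Real.log p := Real.log_le_log (by norm_num) hp4
        have h4 : Real.log 4 = 2 * Real.log 2 := by
          rw [show (4:ℝ) = 2 ^ (2:ℕ) from by norm_num, Real.log_pow]; push_cast; ring
        have hPle : (p:ℝ) ≤ r ^ ((2:ℝ)/3) := hple
        nlinarith
    have h13 : (0:ℝ) ≤ r ^ ((1:ℝ)/3) := Real.rpow_nonneg hr0.le _
    have : r ^ ((1:ℝ)/3) * ((p:ℝ)+1) ≤ r ^ ((1:ℝ)/3) * (Real.log p * r ^ ((2:ℝ)/3)) :=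
      mul_le_mul_of_nonneg_left hkey h13
    rw [div_mul_eq_mul_div, le_div_iff₀ (by linarith : (0:ℝ) < (p:ℝ)+1)]
    nlinarith

lemma hp_deriv_neg (p : ℕ) (r : ℝ) :
    deriv (hp p) (-r)
      = -((p:ℝ)/(2*((p:ℝ)+1)) * (Real.log p/((p:ℝ)-1)) * Real.exp (Real.log p/((p:ℝ)-1) * r)
        - (p:ℝ)/(2*((p:ℝ)+1)) * (Real.log p/((p:ℝ)+1)) * Real.exp (-(Real.log p/((p:ℝ)+1) * r))) := by
  rw [hp_deriv p (-r),
    show Real.log ↑p/((p:ℝ)+1) * (-r) = -(Real.log ↑p/((p:ℝ)+1) * r) from by ring,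
    show -(Real.log ↑p/((p:ℝ)-1) * (-r)) = Real.log ↑p/((p:ℝ)-1) * r from by ring]
  ring

lemma hp_eq_neg (p : ℕ) (r : ℝ) :
    hp p (-r) = (p:ℝ)/(2*((p:ℝ)+1)) * Real.exp (Real.log p/((p:ℝ)-1) * r)
      + (p:ℝ)/(2*((p:ℝ)+1)) * Real.exp (-(Real.log p/((p:ℝ)+1) * r)) + 1/((p:ℝ)+1) := by
  rw [hp_eq p (-r),
    show Real.log ↑p/((p:ℝ)+1) * (-r) = -(Real.log ↑p/((p:ℝ)+1) * r) from by ring,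
    show -(Real.log ↑p/((p:ℝ)-1) * (-r)) = Real.log ↑p/((p:ℝ)-1) * r from by ring]
  ring


lemma exp3_lt : Real.exp 3 < 21 := by
  have h1 : Real.exp 1 < 2.7182818286 := Real.exp_one_lt_d9
  have h2 : Real.exp 3 = (Real.exp 1)^(3:ℕ) := by
    rw [← Real.exp_nat_mul]; norm_num
  have h3 : (0:ℝ) < Real.exp 1 := Real.exp_pos 1
  rw [h2]
  nlinarith [pow_lt_pow_left₀ h1 h3.le (by norm_num : (3:ℕ) ≠ 0)]

lemma case1p (p : ℕ) (r : ℝ) (hP : p.Prime) (hr : 4 ≤ r) (hple : (p:ℝ) ≤ r ^ ((2:ℝ)/3)) :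
    |deriv (hp p) r / hp p r - Real.log p / ((p : ℝ) + 1)|
      ≤ 200 * (Real.log p / ((p : ℝ) + 1)) * Real.exp (-r ^ ((1 : ℝ) / 3)) := by
  have hp2 : 2 ≤ p := hP.two_le
  have hP2 : (2:ℝ) ≤ (p:ℝ) := by exact_mod_cast hp2
  have hQ : (0:ℝ) < (p:ℝ)+1 := by linarith
  have hW : (0:ℝ) < (p:ℝ)-1 := by linarith
  have hL : 0 < Real.log p := Real.log_pos (by linarith)
  have ha : (0:ℝ) < (p:ℝ)/(2*((p:ℝ)+1)) := by positivity
  have hc0 : (0:ℝ) ≤ 1/((p:ℝ)+1) := by positivity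
  have hca : 1/((p:ℝ)+1) ≤ (p:ℝ)/(2*((p:ℝ)+1)) := by
    rw [div_le_div_iff₀ hQ (by positivity)]; nlinarith
  have hα : 0 < Real.log p/((p:ℝ)+1) := by positivity
  have hβ : 0 < Real.log p/((p:ℝ)-1) := by positivity
  have hαβ : Real.log p/((p:ℝ)+1) ≤ Real.log p/((p:ℝ)-1) := by
    rw [div_le_div_iff₀ hQ hW]; nlinarith [mul_nonneg hL.le (by linarith : (0:ℝ) ≤ 2)]
  have hβ3 : Real.log p/((p:ℝ)-1) ≤ 3*(Real.log p/((p:ℝ)+1)) := by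
    rw [show 3*(Real.log ↑p/((p:ℝ)+1)) = (3*Real.log ↑p)/((p:ℝ)+1) from by ring,
      div_le_div_iff₀ hW hQ]
    nlinarith [mul_nonneg hL.le (by linarith : (0:ℝ) ≤ 2*(p:ℝ)-4)]
  have hr0 : (0:ℝ) ≤ r := by linarith
  have key := ratioA ((p:ℝ)/(2*((p:ℝ)+1))) (1/((p:ℝ)+1)) (Real.log p/((p:ℝ)+1))
    (Real.log p/((p:ℝ)-1)) r ha hc0 hca hα hβ hr0
  rw [min_eq_left hαβ] at key
  have hexp : Real.exp (-(Real.log p/((p:ℝ)+1) * r))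
      ≤ Real.exp 3 * Real.exp (-r ^ ((1:ℝ)/3)) := by
    rw [← Real.exp_add]
    apply Real.exp_le_exp.mpr
    have := expbound p r hp2 hr hple
    linarith
  rw [hp_deriv, hp_eq]
  calc |_ - Real.log p/((p:ℝ)+1)| ≤ _ := key
    _ ≤ (5*(Real.log p/((p:ℝ)+1))) * (Real.exp 3 * Real.exp (-r ^ ((1:ℝ)/3))) := by
        apply mul_le_mul (by linarith) hexp (Real.exp_pos _).le (by positivity)
    _ ≤ 200 * (Real.log p/((p:ℝ)+1)) * Real.exp (-r ^ ((1:ℝ)/3)) := by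
        have hAX : 0 ≤ (Real.log p/((p:ℝ)+1)) * Real.exp (-r ^ ((1:ℝ)/3)) := by positivity
        nlinarith [mul_le_mul_of_nonneg_left exp3_lt.le hAX]



lemma case1m (p : ℕ) (r : ℝ) (hP : p.Prime) (hr : 4 ≤ r) (hple : (p:ℝ) ≤ r ^ ((2:ℝ)/3)) :
    |deriv (hp p) (-r) / hp p (-r) + Real.log p / ((p : ℝ) - 1)|
      ≤ 200 * (Real.log p / ((p : ℝ) - 1)) * Real.exp (-r ^ ((1 : ℝ) / 3)) := by
  have hp2 : 2 ≤ p := hP.two_le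
  have hP2 : (2:ℝ) ≤ (p:ℝ) := by exact_mod_cast hp2
  have hQ : (0:ℝ) < (p:ℝ)+1 := by linarith
  have hW : (0:ℝ) < (p:ℝ)-1 := by linarith
  have hL : 0 < Real.log p := Real.log_pos (by linarith)
  have ha : (0:ℝ) < (p:ℝ)/(2*((p:ℝ)+1)) := by positivity
  have hc0 : (0:ℝ) ≤ 1/((p:ℝ)+1) := by positivity
  have hca : 1/((p:ℝ)+1) ≤ (p:ℝ)/(2*((p:ℝ)+1)) := by
    rw [div_le_div_iff₀ hQ (by positivity)]; nlinarith
  have hα : 0 < Real.log p/((p:ℝ)+1) := by positivity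
  have hβ : 0 < Real.log p/((p:ℝ)-1) := by positivity
  have hαβ : Real.log p/((p:ℝ)+1) ≤ Real.log p/((p:ℝ)-1) := by
    rw [div_le_div_iff₀ hQ hW]; nlinarith [mul_nonneg hL.le (by linarith : (0:ℝ) ≤ 2)]
  have hr0 : (0:ℝ) ≤ r := by linarith
  have key := ratioA ((p:ℝ)/(2*((p:ℝ)+1))) (1/((p:ℝ)+1)) (Real.log p/((p:ℝ)-1))
    (Real.log p/((p:ℝ)+1)) r ha hc0 hca hβ hα hr0
  rw [min_eq_right hαβ] at key
  have hexp : Real.exp (-(Real.log p/((p:ℝ)+1) * r))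
      ≤ Real.exp 3 * Real.exp (-r ^ ((1:ℝ)/3)) := by
    rw [← Real.exp_add]
    apply Real.exp_le_exp.mpr
    have := expbound p r hp2 hr hple
    linarith
  rw [hp_deriv_neg, hp_eq_neg, neg_div, neg_add_eq_sub, _root_.abs_sub_comm]
  calc |_ - Real.log p/((p:ℝ)-1)| ≤ _ := key
    _ ≤ (3*(Real.log p/((p:ℝ)-1))) * (Real.exp 3 * Real.exp (-r ^ ((1:ℝ)/3))) := by
        apply mul_le_mul (by linarith) hexp (Real.exp_pos _).le (by positivity)
    _ ≤ 200 * (Real.log p/((p:ℝ)-1)) * Real.exp (-r ^ ((1:ℝ)/3)) := by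
        have hAX : 0 ≤ (Real.log p/((p:ℝ)-1)) * Real.exp (-r ^ ((1:ℝ)/3)) := by positivity
        nlinarith [mul_le_mul_of_nonneg_left exp3_lt.le hAX]

lemma case2p (p : ℕ) (r : ℝ) (hP : p.Prime) (hr : 4 ≤ r) :
    |deriv (hp p) r / hp p r
        - Real.log p / ((p : ℝ) + 1) * Real.tanh (r * Real.log p / ((p : ℝ) + 1))|
      ≤ 200 * (Real.log p / (p : ℝ) ^ 2 + r * Real.log p ^ 2 / (p : ℝ) ^ 3) := by
  have hp2 : 2 ≤ p := hP.two_le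
  have hP2 : (2:ℝ) ≤ (p:ℝ) := by exact_mod_cast hp2
  have hP0 : (0:ℝ) < (p:ℝ) := by linarith
  have hQ : (0:ℝ) < (p:ℝ)+1 := by linarith
  have hW : (0:ℝ) < (p:ℝ)-1 := by linarith
  have hL : 0 < Real.log p := Real.log_pos (by linarith)
  have ha : (0:ℝ) < (p:ℝ)/(2*((p:ℝ)+1)) := by positivity
  have hc0 : (0:ℝ) ≤ 1/((p:ℝ)+1) := by positivity
  have hα : 0 < Real.log p/((p:ℝ)+1) := by positivity
  have hβ : 0 < Real.log p/((p:ℝ)-1) := by positivity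
  have hαβ : Real.log p/((p:ℝ)+1) ≤ Real.log p/((p:ℝ)-1) := by
    rw [div_le_div_iff₀ hQ hW]; nlinarith [mul_nonneg hL.le (by linarith : (0:ℝ) ≤ 2)]
  have hr0 : (0:ℝ) ≤ r := by linarith
  have key := ratioC ((p:ℝ)/(2*((p:ℝ)+1))) (1/((p:ℝ)+1)) (Real.log p/((p:ℝ)+1))
    (Real.log p/((p:ℝ)-1)) r ha hc0 hα.le hβ.le hr0
  rw [_root_.abs_of_nonneg (by linarith : (0:ℝ) ≤ Real.log p/((p:ℝ)-1) - Real.log p/((p:ℝ)+1))] at key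
  have hba : Real.log p/((p:ℝ)-1) - Real.log p/((p:ℝ)+1) ≤ 4*Real.log p/(p:ℝ)^2 := by
    rw [div_sub_div _ _ hW.ne' hQ.ne', div_le_div_iff₀ (by positivity) (by positivity)]
    nlinarith [mul_nonneg hL.le (by nlinarith : (0:ℝ) ≤ 2*(p:ℝ)^2-4)]
  have hab2 : Real.log p/((p:ℝ)+1) + Real.log p/((p:ℝ)-1) ≤ 4*Real.log p/(p:ℝ) := by
    rw [div_add_div _ _ hQ.ne' hW.ne', div_le_div_iff₀ (by positivity) hP0]
    nlinarith [mul_nonneg hL.le (by nlinarith : (0:ℝ) ≤ 2*(p:ℝ)^2-4)]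
  have hac : (Real.log p/((p:ℝ)+1))*(1/((p:ℝ)+1))/((p:ℝ)/(2*((p:ℝ)+1)))
      ≤ 2*Real.log p/(p:ℝ)^2 := by
    have heq : (Real.log p/((p:ℝ)+1))*(1/((p:ℝ)+1))/((p:ℝ)/(2*((p:ℝ)+1)))
        = 2*Real.log p/(((p:ℝ)+1)*(p:ℝ)) := by
      field_simp
    rw [heq, div_le_div_iff₀ (by positivity) (by positivity)]
    nlinarith [mul_nonneg hL.le hP0.le, mul_nonneg (mul_nonneg hL.le hP0.le) hP0.le]
  have hsum : 0 ≤ (Real.log p/((p:ℝ)+1) + Real.log p/((p:ℝ)-1))*r :=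
    mul_nonneg (by linarith) hr0
  have hmul : (Real.log p/((p:ℝ)-1) - Real.log p/((p:ℝ)+1))
        * (1 + (Real.log p/((p:ℝ)+1) + Real.log p/((p:ℝ)-1))*r)
      ≤ (4*Real.log p/(p:ℝ)^2) * (1 + (4*Real.log p/(p:ℝ))*r) := by
    apply mul_le_mul hba _ (by linarith) (by positivity)
    have := mul_le_mul_of_nonneg_right hab2 hr0
    linarith
  have heq2 : (4*Real.log p/(p:ℝ)^2) * (1 + (4*Real.log p/(p:ℝ))*r)
        + 2*Real.log p/(p:ℝ)^2
      = 6*(Real.log p/(p:ℝ)^2) + 16*(r*Real.log p^2/(p:ℝ)^3) := by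
    field_simp; ring
  have h1 : (0:ℝ) ≤ Real.log p/(p:ℝ)^2 := by positivity
  have h2 : (0:ℝ) ≤ r*Real.log p^2/(p:ℝ)^3 := by positivity
  rw [show r * Real.log ↑p / ((p:ℝ)+1) = Real.log ↑p/((p:ℝ)+1) * r from by ring,
    hp_deriv, hp_eq]
  refine le_trans key ?_
  linarith [hmul, hac, heq2, h1, h2]

lemma case2m (p : ℕ) (r : ℝ) (hP : p.Prime) (hr : 4 ≤ r) :
    |deriv (hp p) (-r) / hp p (-r)
        + Real.log p / ((p : ℝ) - 1) * Real.tanh (r * Real.log p / ((p : ℝ) - 1))|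
      ≤ 200 * (Real.log p / (p : ℝ) ^ 2 + r * Real.log p ^ 2 / (p : ℝ) ^ 3) := by
  have hp2 : 2 ≤ p := hP.two_le
  have hP2 : (2:ℝ) ≤ (p:ℝ) := by exact_mod_cast hp2
  have hP0 : (0:ℝ) < (p:ℝ) := by linarith
  have hQ : (0:ℝ) < (p:ℝ)+1 := by linarith
  have hW : (0:ℝ) < (p:ℝ)-1 := by linarith
  have hL : 0 < Real.log p := Real.log_pos (by linarith)
  have ha : (0:ℝ) < (p:ℝ)/(2*((p:ℝ)+1)) := by positivity
  have hc0 : (0:ℝ) ≤ 1/((p:ℝ)+1) := by positivity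
  have hα : 0 < Real.log p/((p:ℝ)+1) := by positivity
  have hβ : 0 < Real.log p/((p:ℝ)-1) := by positivity
  have hαβ : Real.log p/((p:ℝ)+1) ≤ Real.log p/((p:ℝ)-1) := by
    rw [div_le_div_iff₀ hQ hW]; nlinarith [mul_nonneg hL.le (by linarith : (0:ℝ) ≤ 2)]
  have hr0 : (0:ℝ) ≤ r := by linarith
  have key := ratioC ((p:ℝ)/(2*((p:ℝ)+1))) (1/((p:ℝ)+1)) (Real.log p/((p:ℝ)-1))
    (Real.log p/((p:ℝ)+1)) r ha hc0 hβ.le hα.le hr0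
  rw [_root_.abs_sub_comm (Real.log ↑p/((p:ℝ)+1)) (Real.log ↑p/((p:ℝ)-1)),
    _root_.abs_of_nonneg (by linarith : (0:ℝ) ≤ Real.log p/((p:ℝ)-1) - Real.log p/((p:ℝ)+1))] at key
  have hba : Real.log p/((p:ℝ)-1) - Real.log p/((p:ℝ)+1) ≤ 4*Real.log p/(p:ℝ)^2 := by
    rw [div_sub_div _ _ hW.ne' hQ.ne', div_le_div_iff₀ (by positivity) (by positivity)]
    nlinarith [mul_nonneg hL.le (by nlinarith : (0:ℝ) ≤ 2*(p:ℝ)^2-4)]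
  have hab2 : Real.log p/((p:ℝ)-1) + Real.log p/((p:ℝ)+1) ≤ 4*Real.log p/(p:ℝ) := by
    rw [div_add_div _ _ hW.ne' hQ.ne', div_le_div_iff₀ (by positivity) hP0]
    nlinarith [mul_nonneg hL.le (by nlinarith : (0:ℝ) ≤ 2*(p:ℝ)^2-4)]
  have hac : (Real.log p/((p:ℝ)-1))*(1/((p:ℝ)+1))/((p:ℝ)/(2*((p:ℝ)+1)))
      ≤ 4*Real.log p/(p:ℝ)^2 := by
    have heq : (Real.log p/((p:ℝ)-1))*(1/((p:ℝ)+1))/((p:ℝ)/(2*((p:ℝ)+1)))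
        = 2*Real.log p/(((p:ℝ)-1)*(p:ℝ)) := by
      field_simp
    rw [heq, div_le_div_iff₀ (by positivity) (by positivity)]
    nlinarith [mul_nonneg (mul_nonneg hL.le hP0.le) hP0.le, mul_nonneg hL.le hP0.le]
  have hmul : (Real.log p/((p:ℝ)-1) - Real.log p/((p:ℝ)+1))
        * (1 + (Real.log p/((p:ℝ)-1) + Real.log p/((p:ℝ)+1))*r)
      ≤ (4*Real.log p/(p:ℝ)^2) * (1 + (4*Real.log p/(p:ℝ))*r) := by
    have hsum : 0 ≤ (Real.log p/((p:ℝ)-1) + Real.log p/((p:ℝ)+1))*r :=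
      mul_nonneg (by linarith) hr0
    apply mul_le_mul hba _ (by linarith) (by positivity)
    have := mul_le_mul_of_nonneg_right hab2 hr0
    linarith
  have heq2 : (4*Real.log p/(p:ℝ)^2) * (1 + (4*Real.log p/(p:ℝ))*r)
        + 4*Real.log p/(p:ℝ)^2
      = 8*(Real.log p/(p:ℝ)^2) + 16*(r*Real.log p^2/(p:ℝ)^3) := by
    field_simp; ring
  have h1 : (0:ℝ) ≤ Real.log p/(p:ℝ)^2 := by positivity
  have h2 : (0:ℝ) ≤ r*Real.log p^2/(p:ℝ)^3 := by positivity
  rw [show r * Real.log ↑p / ((p:ℝ)-1) = Real.log ↑p/((p:ℝ)-1) * r from by ring,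
    hp_deriv_neg, hp_eq_neg, neg_div, neg_add_eq_sub, _root_.abs_sub_comm]
  refine le_trans key ?_
  linarith [hmul, hac, heq2, h1, h2]



/-- Lemma 4.3: approximations of the logarithmic derivative
`h_p'(±r)/h_p(±r)` for `r ≥ 4`, according to whether `p ≤ r^{2/3}` or `p > r^{2/3}`. -/
theorem statement14 :
    ∃ c₀ : ℝ, 0 < c₀ ∧
      ∀ r : ℝ, 4 ≤ r → ∀ p : ℕ, p.Prime →
        ((p : ℝ) ≤ r ^ ((2 : ℝ) / 3) →
          |deriv (hp p) r / hp p r - Real.log p / ((p : ℝ) + 1)|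
              ≤ c₀ * (Real.log p / ((p : ℝ) + 1)) * Real.exp (-r ^ ((1 : ℝ) / 3)) ∧
          |deriv (hp p) (-r) / hp p (-r) + Real.log p / ((p : ℝ) - 1)|
              ≤ c₀ * (Real.log p / ((p : ℝ) - 1)) * Real.exp (-r ^ ((1 : ℝ) / 3))) ∧
        (r ^ ((2 : ℝ) / 3) < (p : ℝ) →
          |deriv (hp p) r / hp p r
              - Real.log p / ((p : ℝ) + 1) * Real.tanh (r * Real.log p / ((p : ℝ) + 1))|
              ≤ c₀ * (Real.log p / (p : ℝ) ^ 2 + r * Real.log p ^ 2 / (p : ℝ) ^ 3) ∧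
          |deriv (hp p) (-r) / hp p (-r)
              + Real.log p / ((p : ℝ) - 1) * Real.tanh (r * Real.log p / ((p : ℝ) - 1))|
              ≤ c₀ * (Real.log p / (p : ℝ) ^ 2 + r * Real.log p ^ 2 / (p : ℝ) ^ 3)) := by
  refine ⟨200, by norm_num, fun r hr p hP =>
    ⟨fun hple => ⟨case1p p r hP hr hple, case1m p r hP hr hple⟩,
     fun _ => ⟨case2p p r hP hr, case2m p r hP hr⟩⟩⟩
end
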